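/- arXiv:1411.6497 — 3 statements merged into one kernel-verified Lean document; each statement's English description precedes it below -/
import Mathlib

section
/- Let L be an algebraic lattice and let φ₁, φ₂ be algebraic (finitary) closure operators on L. Then the pointwise meet x ↦ φ₁(x) ⊓ φ₂(x) is again an algebraic closure operator on L. -/
open CompleteLattice

/-- A closure operator on a complete lattice: extensive, idempotent and isotone. -/
def IsClosureOp {L : Type*} [CompleteLattice L] (φ : L → L) : Prop :=
  (∀ x, x ≤ φ x) ∧ (∀ x, φ (φ x) = φ x) ∧ (∀ x y : L, x ≤ y → φ x ≤ φ y)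

/-- Compact element of a complete lattice, with its meaning in the older Mathlib
(`CompleteLattice.IsCompactElement`, since removed). -/
def CompleteLattice.IsCompactElement {α : Type*} [CompleteLattice α] (k : α) :=
  ∀ s : Set α, k ≤ sSup s → ∃ t : Finset α, ↑t ⊆ s ∧ k ≤ t.sup id

/-- A map on a complete lattice is finitary if its value at `x` is the sup of its
values at the compact elements below `x`. -/
def Finitary {L : Type*} [CompleteLattice L] (φ : L → L) : Prop :=
  ∀ x : L, φ x = ⨆ k ∈ {k : L | CompleteLattice.IsCompactElement k ∧ k ≤ x}, φ k

lemma isCompact_bot' {L : Type*} [CompleteLattice L] :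
    CompleteLattice.IsCompactElement (⊥ : L) := fun _ _ => ⟨∅, by simp⟩

lemma isCompact_sup' {L : Type*} [CompleteLattice L] {a b : L}
    (ha : CompleteLattice.IsCompactElement a) (hb : CompleteLattice.IsCompactElement b) :
    CompleteLattice.IsCompactElement (a ⊔ b) := by
  classical
  intro s hs
  obtain ⟨t₁, ht₁, hat⟩ := ha s (le_sup_left.trans hs)
  obtain ⟨t₂, ht₂, hbt⟩ := hb s (le_sup_right.trans hs)
  refine ⟨t₁ ∪ t₂, by push_cast; exact Set.union_subset ht₁ ht₂, sup_le ?_ ?_⟩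
  · exact hat.trans (Finset.sup_mono Finset.subset_union_left)
  · exact hbt.trans (Finset.sup_mono Finset.subset_union_right)

/-- The pointwise meet of two algebraic (finitary) closure operators on an
algebraic lattice is again an algebraic closure operator. -/
theorem meet_of_algebraic_closure_operators {L : Type*} [CompleteLattice L]
    [IsCompactlyGenerated L] (φ₁ φ₂ : L → L)
    (h₁ : IsClosureOp φ₁) (h₂ : IsClosureOp φ₂)
    (f₁ : Finitary φ₁) (f₂ : Finitary φ₂) :
    IsClosureOp (fun x => φ₁ x ⊓ φ₂ x) ∧ Finitary (fun x => φ₁ x ⊓ φ₂ x) := by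
  obtain ⟨e₁, i₁, m₁⟩ := h₁
  obtain ⟨e₂, i₂, m₂⟩ := h₂
  refine ⟨⟨fun x => le_inf (e₁ x) (e₂ x), fun x => ?_,
    fun x y h => inf_le_inf (m₁ _ _ h) (m₂ _ _ h)⟩, fun x => ?_⟩
  · exact le_antisymm
      (inf_le_inf ((m₁ _ _ inf_le_left).trans_eq (i₁ x))
        ((m₂ _ _ inf_le_right).trans_eq (i₂ x)))
      (le_inf (e₁ _) (e₂ _))
  · apply le_antisymm
    · show φ₁ x ⊓ φ₂ x ≤ ⨆ k ∈ {k : L | CompleteLattice.IsCompactElement k ∧ k ≤ x}, φ₁ k ⊓ φ₂ k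
      rw [← sSup_compact_le_eq (φ₁ x ⊓ φ₂ x)]
      apply _root_.sSup_le
      rintro c ⟨hc, hcle⟩
      -- the set of compact elements below x
      have hSne : ({k : L | CompleteLattice.IsCompactElement k ∧ k ≤ x}).Nonempty :=
        ⟨⊥, isCompact_bot', bot_le⟩
      have hSdir : DirectedOn (· ≤ ·) {k : L | CompleteLattice.IsCompactElement k ∧ k ≤ x} := by
        rintro a ⟨ha, hax⟩ b ⟨hb, hbx⟩
        exact ⟨a ⊔ b, ⟨isCompact_sup' ha hb, sup_le hax hbx⟩, le_sup_left, le_sup_right⟩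
      have key : ∀ φ : L → L, (∀ x y : L, x ≤ y → φ x ≤ φ y) → Finitary φ →
          c ≤ φ x → ∃ k, (CompleteLattice.IsCompactElement k ∧ k ≤ x) ∧ c ≤ φ k := by
        intro φ mφ fφ hcφ
        have hdir' : DirectedOn (· ≤ ·) (φ '' {k : L | CompleteLattice.IsCompactElement k ∧ k ≤ x}) := by
          rintro _ ⟨a, ha, rfl⟩ _ ⟨b, hb, rfl⟩
          obtain ⟨k, hk, hak, hbk⟩ := hSdir a ha b hb
          exact ⟨φ k, ⟨k, hk, rfl⟩, mφ _ _ hak, mφ _ _ hbk⟩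
        have : c ≤ sSup (φ '' {k : L | CompleteLattice.IsCompactElement k ∧ k ≤ x}) := by
          rw [sSup_image, ← fφ x]; exact hcφ
        obtain ⟨_, ⟨k, hk, rfl⟩, hck⟩ :=
          (isCompactElement_iff_le_of_directed_sSup_le L c).mp hc _
            (hSne.image _) hdir' this
        exact ⟨k, hk, hck⟩
      obtain ⟨k₁, hk₁, hck₁⟩ := key φ₁ m₁ f₁ (hcle.trans inf_le_left)
      obtain ⟨k₂, hk₂, hck₂⟩ := key φ₂ m₂ f₂ (hcle.trans inf_le_right)
      have hk : CompleteLattice.IsCompactElement (k₁ ⊔ k₂) ∧ k₁ ⊔ k₂ ≤ x :=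
        ⟨isCompact_sup' hk₁.1 hk₂.1, sup_le hk₁.2 hk₂.2⟩
      have : c ≤ φ₁ (k₁ ⊔ k₂) ⊓ φ₂ (k₁ ⊔ k₂) :=
        le_inf (hck₁.trans (m₁ _ _ le_sup_left)) (hck₂.trans (m₂ _ _ le_sup_right))
      exact this.trans (le_biSup (fun k => φ₁ k ⊓ φ₂ k) hk)
    · exact iSup₂_le fun k hk => inf_le_inf (m₁ _ _ hk.2) (m₂ _ _ hk.2)
end

section
/- Let L be an algebraic lattice and let (φ_i)_{i∈I} be a family of algebraic (finitary) closure operators on L. Define τ : L → L by τ(x) = ⨆ {⨅_{i∈I} φ_i(k) : k compact, k ≤ x}. Then τ is an algebraic closure operator, τ(x) ≤ φ_i(x) for every i ∈ I and x ∈ L, and every algebraic closure operator ρ with ρ(x) ≤ φ_i(x) for all i ∈ I and x ∈ L satisfies ρ(x) ≤ τ(x) for all x ∈ L. That is, τ is the greatest lower bound of the family (φ_i) among algebraic closure operators. -/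
lemma aux_compact_iff {L : Type*} [CompleteLattice L] (k : L) :
    CompleteLattice.IsCompactElement k ↔ _root_.IsCompactElement k :=
  (CompleteLattice.isCompactElement_iff_exists_le_sSup_of_le_sSup L k).symm

section Aux

open CompleteLattice

variable {L : Type*} [CompleteLattice L] {I : Type*}

private lemma aux_bot_compact : CompleteLattice.IsCompactElement (⊥ : L) := by
  intro s _
  exact ⟨∅, by simp⟩

private lemma aux_sup_compact {a b : L} (ha : CompleteLattice.IsCompactElement a) (hb : CompleteLattice.IsCompactElement b) :
    CompleteLattice.IsCompactElement (a ⊔ b) := by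
  classical
  have := isCompactElement_finsetSup (f := (id : L → L)) ({a, b} : Finset L)
    (by
      intro x hx
      rcases Finset.mem_insert.mp hx with h | h
      · simpa [h] using (aux_compact_iff _).mp ha
      · simpa [Finset.mem_singleton.mp h] using (aux_compact_iff _).mp hb)
  exact (aux_compact_iff _).mpr (by simpa using this)

/-- `τ`. -/
private def tau (φ : I → L → L) (x : L) : L :=
  ⨆ k ∈ {k : L | CompleteLattice.IsCompactElement k ∧ k ≤ x}, ⨅ i, φ i k

private lemma le_tau (φ : I → L → L) {k x : L} (hk : CompleteLattice.IsCompactElement k) (hkx : k ≤ x) :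
    (⨅ i, φ i k) ≤ tau φ x :=
  le_biSup (fun k => ⨅ i, φ i k)
    (show k ∈ {k : L | CompleteLattice.IsCompactElement k ∧ k ≤ x} from ⟨hk, hkx⟩)

private lemma tau_le (φ : I → L → L) {x c : L}
    (h : ∀ k : L, CompleteLattice.IsCompactElement k → k ≤ x → (⨅ i, φ i k) ≤ c) : tau φ x ≤ c :=
  iSup₂_le fun k hk => h k hk.1 hk.2

private lemma tau_mono (φ : I → L → L) {x y : L} (hxy : x ≤ y) : tau φ x ≤ tau φ y :=
  tau_le φ fun k hk hkx => le_tau φ hk (hkx.trans hxy)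

private lemma tau_extensive [IsCompactlyGenerated L] (φ : I → L → L)
    (hco : ∀ i, IsClosureOp (φ i)) (x : L) : x ≤ tau φ x := by
  conv_lhs => rw [← sSup_compact_le_eq x]
  refine sSup_le fun k hk => ?_
  exact le_trans (le_iInf fun i => (hco i).1 k) (le_tau φ ((aux_compact_iff _).mpr hk.1) hk.2)

private lemma tau_idem [IsCompactlyGenerated L] (φ : I → L → L)
    (hco : ∀ i, IsClosureOp (φ i)) (x : L) : tau φ (tau φ x) = tau φ x := by
  refine le_antisymm ?_ (tau_extensive φ hco _)
  refine tau_le φ fun c hc hcτ => ?_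
  -- `c` is compact and below `tau φ x`, which is the sSup of a directed set.
  set S : Set L := (fun k => ⨅ i, φ i k) '' {k : L | CompleteLattice.IsCompactElement k ∧ k ≤ x} with hS
  have hτ : tau φ x = sSup S := by
    rw [hS, sSup_image]; rfl
  have hne : S.Nonempty := ⟨⨅ i, φ i ⊥, ⟨⊥, ⟨aux_bot_compact, bot_le⟩, rfl⟩⟩
  have hdir : DirectedOn (· ≤ ·) S := by
    rintro _ ⟨k₁, hk₁, rfl⟩ _ ⟨k₂, hk₂, rfl⟩
    refine ⟨⨅ i, φ i (k₁ ⊔ k₂), ⟨k₁ ⊔ k₂, ⟨aux_sup_compact hk₁.1 hk₂.1, sup_le hk₁.2 hk₂.2⟩, rfl⟩,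
      le_iInf fun i => (iInf_le _ i).trans ((hco i).2.2 _ _ le_sup_left),
      le_iInf fun i => (iInf_le _ i).trans ((hco i).2.2 _ _ le_sup_right)⟩
  obtain ⟨z, hzS, hcz⟩ :=
    (isCompactElement_iff_le_of_directed_sSup_le L c).mp ((aux_compact_iff c).mp hc) S hne hdir (hτ ▸ hcτ)
  obtain ⟨k', hk', rfl⟩ := hzS
  have : (⨅ i, φ i c) ≤ ⨅ i, φ i k' := by
    refine le_iInf fun i => ?_
    have hck : c ≤ φ i k' := hcz.trans (iInf_le _ i)
    exact le_trans (iInf_le (fun i => φ i c) i)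
      (le_trans ((hco i).2.2 _ _ hck) (le_of_eq ((hco i).2.1 k')))
  exact this.trans (le_tau φ hk'.1 hk'.2)

private lemma tau_finitary (φ : I → L → L) : Finitary (tau φ) := by
  intro x
  refine le_antisymm ?_ (iSup₂_le fun k hk => tau_mono φ hk.2)
  refine tau_le φ fun k hk hkx => ?_
  exact le_trans (le_tau φ hk le_rfl) (le_biSup (fun k => tau φ k)
    (show k ∈ {k : L | CompleteLattice.IsCompactElement k ∧ k ≤ x} from ⟨hk, hkx⟩))

end Aux

/-- For a family of algebraic closure operators `φ_i` on an algebraic lattice,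
`τ x = ⨆ {⨅ i, φ_i k : k compact, k ≤ x}` is an algebraic closure operator, a
lower bound of the family, and greatest among algebraic closure operators that
are lower bounds of the family. -/
theorem tau_is_glb {L : Type*} [CompleteLattice L] [IsCompactlyGenerated L]
    {I : Type*} (φ : I → L → L)
    (hco : ∀ i, IsClosureOp (φ i)) (hfin : ∀ i, Finitary (φ i)) :
    IsClosureOp (fun x : L =>
      ⨆ k ∈ {k : L | CompleteLattice.IsCompactElement k ∧ k ≤ x}, ⨅ i, φ i k) ∧
    Finitary (fun x : L =>
      ⨆ k ∈ {k : L | CompleteLattice.IsCompactElement k ∧ k ≤ x}, ⨅ i, φ i k) ∧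
    (∀ (i : I) (x : L),
      (⨆ k ∈ {k : L | CompleteLattice.IsCompactElement k ∧ k ≤ x}, ⨅ i, φ i k) ≤
        φ i x) ∧
    (∀ ρ : L → L, IsClosureOp ρ → Finitary ρ → (∀ (i : I) (x : L), ρ x ≤ φ i x) →
      ∀ x : L, ρ x ≤
        ⨆ k ∈ {k : L | CompleteLattice.IsCompactElement k ∧ k ≤ x}, ⨅ i, φ i k) := by
  refine ⟨⟨tau_extensive φ hco, tau_idem φ hco, fun x y => tau_mono φ⟩, tau_finitary φ,
    fun i x => ?_, fun ρ hρ hρfin hρle x => ?_⟩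
  · exact tau_le φ fun k hk hkx => (iInf_le _ i).trans ((hco i).2.2 _ _ hkx)
  · rw [hρfin x]
    refine iSup₂_le fun k hk => ?_
    exact le_trans (le_iInf fun i => hρle i k) (le_tau φ hk.1 hk.2)
end

section
/- Let L be an algebraic lattice, let a, b ∈ L be compact, and let v ∈ L be arbitrary. For w ∈ L define φ^w_{a,b} : L → L by φ^w_{a,b}(x) = x ⊔ w ⊔ b if a ≤ x ⊔ w, and φ^w_{a,b}(x) = x ⊔ w otherwise. Then for every x ∈ L, φ^v_{a,b}(x) = ⨆ {φ^k_{a,b}(x) : k compact, k ≤ v}; that is, φ^v_{a,b} is the (pointwise, directed) join of the operators φ^k_{a,b} over compact k ≤ v. -/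
open scoped Classical in
/-- The operator `φ^w_{a,b}` sending `x` to `x ⊔ w ⊔ b` when `a ≤ x ⊔ w`, and to
`x ⊔ w` otherwise. -/
noncomputable def phiV {L : Type*} [CompleteLattice L] (w a b : L) (x : L) : L :=
  if a ≤ x ⊔ w then x ⊔ w ⊔ b else x ⊔ w

private lemma compact_bot {L : Type*} [CompleteLattice L] :
    IsCompactElement (⊥ : L) := by
  simpa using CompleteLattice.isCompactElement_finsetSup (∅ : Finset L) (f := id) (by simp)

private lemma compact_sup {L : Type*} [CompleteLattice L] {k₁ k₂ : L}
    (h₁ : IsCompactElement k₁) (h₂ : IsCompactElement k₂) :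
    IsCompactElement (k₁ ⊔ k₂) := by
  classical
  have := CompleteLattice.isCompactElement_finsetSup ({k₁, k₂} : Finset L) (f := id)
    (by intro c hc; simp at hc; rcases hc with h | h <;> simp [h, h₁, h₂])
  simpa using this

/-- For compact `a, b` and arbitrary `v` in an algebraic lattice, `φ^v_{a,b}` is
the pointwise join of the operators `φ^k_{a,b}` over the compact elements
`k ≤ v`. -/
theorem phiV_eq_sup_compact {L : Type*} [CompleteLattice L] [IsCompactlyGenerated L]
    (a b : L) (ha : IsCompactElement a)
    (hb : IsCompactElement b) (v : L) :
    ∀ x : L, phiV v a b x =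
      ⨆ k ∈ {k : L | IsCompactElement k ∧ k ≤ v}, phiV k a b x := by
  classical
  intro x
  set S : Set L := {k : L | IsCompactElement k ∧ k ≤ v} with hSdef
  have hS : sSup S = v := sSup_compact_le_eq v
  have hSne : S.Nonempty := ⟨⊥, compact_bot, bot_le⟩
  -- sup over k in S of x ⊔ k is x ⊔ v
  have hsup : (⨆ k ∈ S, (x ⊔ k)) = x ⊔ v := by
    apply le_antisymm
    · exact iSup₂_le fun k hk => sup_le_sup_left (le_trans (le_sSup hk) hS.le) x
    · obtain ⟨k₀, hk₀⟩ := hSne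
      refine sup_le ?_ ?_
      · exact le_trans le_sup_left (le_iSup₂ (f := fun k (_ : k ∈ S) => x ⊔ k) k₀ hk₀)
      · rw [← hS]
        exact sSup_le fun k hk => le_trans le_sup_right
          (le_iSup₂ (f := fun k (_ : k ∈ S) => x ⊔ k) k hk)
  have hle : ∀ k ∈ S, x ⊔ k ≤ ⨆ k ∈ S, phiV k a b x := by
    intro k hk
    refine le_trans ?_ (le_iSup₂ (f := fun k (_ : k ∈ S) => phiV k a b x) k hk)
    unfold phiV
    split <;> simp
  by_cases hav : a ≤ x ⊔ v
  · -- find compact k₀ ≤ v with a ≤ x ⊔ k₀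
    have hD : DirectedOn (· ≤ ·) ((fun k => x ⊔ k) '' S) := by
      rintro _ ⟨k₁, hk₁, rfl⟩ _ ⟨k₂, hk₂, rfl⟩
      refine ⟨x ⊔ (k₁ ⊔ k₂), ⟨k₁ ⊔ k₂, ⟨compact_sup hk₁.1 hk₂.1, sup_le hk₁.2 hk₂.2⟩, rfl⟩,
        ?_, ?_⟩
      · exact sup_le_sup_left le_sup_left x
      · exact sup_le_sup_left le_sup_right x
    have hDsup : a ≤ sSup ((fun k => x ⊔ k) '' S) := by
      rwa [sSup_image, hsup]
    obtain ⟨_, ⟨k₀, hk₀, rfl⟩, hak₀⟩ :=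
      (CompleteLattice.isCompactElement_iff_le_of_directed_sSup_le L a).mp ha _
        (hSne.image _) hD hDsup
    have hLHS : phiV v a b x = x ⊔ v ⊔ b := if_pos hav
    rw [hLHS]
    apply le_antisymm
    · refine sup_le ?_ ?_
      · rw [← hsup]
        exact iSup₂_le fun k hk => le_trans (hle k hk) le_rfl
      · have : phiV k₀ a b x = x ⊔ k₀ ⊔ b := if_pos hak₀
        refine le_trans (le_sup_right : b ≤ x ⊔ k₀ ⊔ b) ?_
        rw [← this]
        exact le_iSup₂ (f := fun k (_ : k ∈ S) => phiV k a b x) k₀ hk₀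
    · refine iSup₂_le fun k hk => ?_
      unfold phiV
      have hxk : x ⊔ k ≤ x ⊔ v := sup_le_sup_left hk.2 x
      split
      · exact sup_le (le_trans hxk le_sup_left) le_sup_right
      · exact le_trans hxk le_sup_left
  · -- no compact k ≤ v has a ≤ x ⊔ k
    have hLHS : phiV v a b x = x ⊔ v := if_neg hav
    rw [hLHS]
    apply le_antisymm
    · rw [← hsup]
      exact iSup₂_le fun k hk => le_trans (hle k hk) le_rfl
    · refine iSup₂_le fun k hk => ?_
      have hnak : ¬ a ≤ x ⊔ k := fun h => hav (h.trans (sup_le_sup_left hk.2 x))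
      rw [phiV, if_neg hnak]
      exact sup_le_sup_left hk.2 x
end
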